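/- Let (A, q) be a metric group (a finite Abelian group with a non-degenerate quadratic form q: A → kˣ) of exponent n that is generated by its isotropic elements. Then A contains an isotropic element of order exactly n. -/

import Mathlib

/-- The bilinear form associated to a quadratic form `q : A → kˣ`. -/
def Bform {A k : Type*} [AddCommGroup A] [Field k] (q : A → kˣ) (x y : A) : kˣ :=
  q (x + y) * (q x * q y)⁻¹

/-- `q : A → kˣ` is a quadratic form: `q(-x) = q(x)` and its associated form is bilinear. -/
def IsQuadraticForm {A k : Type*} [AddCommGroup A] [Field k] (q : A → kˣ) : Prop :=
  (∀ x, q (-x) = q x) ∧ ∀ x y z, Bform q (x + y) z = Bform q x z * Bform q y z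

/-- Non-degeneracy of the bilinear form associated to `q`. -/
def Nondeg {A k : Type*} [AddCommGroup A] [Field k] (q : A → kˣ) : Prop :=
  ∀ x, (∀ y, Bform q x y = 1) → x = 0

section Aux

variable {A k : Type*} [AddCommGroup A] [Field k] {q : A → kˣ} (hq : IsQuadraticForm q)

lemma Bform_symm (x y : A) : Bform q x y = Bform q y x := by
  simp [Bform, add_comm, mul_comm]

include hq

lemma Bform_zero_left (z : A) : Bform q 0 z = 1 := by
  have h := hq.2 0 0 z
  rw [add_zero] at h
  exact mul_eq_right.mp h.symm

lemma q_zero : q (0 : A) = 1 := by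
  have h := Bform_zero_left hq (0 : A)
  unfold Bform at h
  rw [add_zero] at h
  have h2 : q (0 : A) = q 0 * q 0 := mul_inv_eq_one.mp h
  exact mul_eq_left.mp h2.symm

lemma Bform_neg_left (x z : A) : Bform q (-x) z = (Bform q x z)⁻¹ := by
  have h := hq.2 x (-x) z
  rw [add_neg_cancel, Bform_zero_left hq] at h
  exact eq_inv_of_mul_eq_one_right (by rw [← h])

lemma Bform_self (x : A) : Bform q x x = q x ^ 2 := by
  have h : Bform q (-x) x = (q x * q x)⁻¹ := by
    unfold Bform
    rw [neg_add_cancel, q_zero hq, hq.1 x, one_mul]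
  rw [Bform_neg_left hq] at h
  rw [inv_injective h, sq]

lemma Bform_nsmul_left (x z : A) (m : ℕ) :
    Bform q (m • x) z = (Bform q x z) ^ m := by
  induction m with
  | zero => simpa using Bform_zero_left hq z
  | succ m ih => rw [succ_nsmul, hq.2, ih, pow_succ]

lemma q_add (x y : A) : q (x + y) = Bform q x y * (q x * q y) := by
  rw [Bform, inv_mul_cancel_right]

lemma q_nsmul_isotropic {x : A} (hx : q x = 1) (m : ℕ) : q (m • x) = 1 := by
  induction m with
  | zero => simpa using q_zero hq
  | succ m ih =>
    rw [succ_nsmul, q_add hq, ih, hx, Bform_nsmul_left hq, Bform_self hq, hx]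
    simp

lemma Bform_eq_one_of_coprime (x y : A)
    (h : Nat.Coprime (addOrderOf x) (addOrderOf y)) : Bform q x y = 1 := by
  have h1 : Bform q x y ^ addOrderOf x = 1 := by
    rw [← Bform_nsmul_left hq, addOrderOf_nsmul_eq_zero, Bform_zero_left hq]
  have h2 : Bform q x y ^ addOrderOf y = 1 := by
    rw [Bform_symm, ← Bform_nsmul_left hq, addOrderOf_nsmul_eq_zero,
      Bform_zero_left hq]
  have d1 := orderOf_dvd_of_pow_eq_one h1
  have d2 := orderOf_dvd_of_pow_eq_one h2
  have : orderOf (Bform q x y) ∣ 1 := h ▸ Nat.dvd_gcd d1 d2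
  rw [orderOf_eq_one_iff.mp (Nat.dvd_one.mp this)]

end Aux

/-- A metric group of exponent `n` generated by its isotropic elements contains an
isotropic element of order exactly `n`. -/
theorem stmt4 {k : Type*} [Field k] [CharZero k]
    {A : Type*} [AddCommGroup A] [Finite A] (q : A → kˣ)
    (hq : IsQuadraticForm q) (hnd : Nondeg q)
    (hgen : AddSubgroup.closure {x : A | q x = 1} = ⊤) :
    ∃ a : A, q a = 1 ∧ addOrderOf a = AddMonoid.exponent A := by
  set n := AddMonoid.exponent A with hn_def
  have hn : n ≠ 0 := AddMonoid.exponent_ne_zero_of_finite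
  -- for each prime p dividing n, find an isotropic element of order p ^ (n.factorization p)
  have key : ∀ p ∈ n.primeFactors, ∃ y : A, q y = 1 ∧ addOrderOf y = p ^ n.factorization p := by
    intro p hp
    obtain ⟨hp', hpn, -⟩ := Nat.mem_primeFactors.mp hp
    have hnp0 : n / p ≠ 0 := Nat.div_ne_zero_iff_of_dvd hpn |>.mpr ⟨hn, hp'.ne_zero⟩
    -- there is an isotropic x with p ^ (n.factorization p) ∣ addOrderOf x
    have hex : ∃ x : A, q x = 1 ∧ p ^ n.factorization p ∣ addOrderOf x := by
      by_contra h
      push_neg at h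
      -- then every isotropic element has order dividing n / p
      have hsub : {x : A | q x = 1} ⊆ {x : A | (n / p) • x = 0} := by
        intro x hx
        have hd0 : addOrderOf x ≠ 0 := (addOrderOf_pos x).ne'
        have hdn : addOrderOf x ∣ n := AddMonoid.addOrder_dvd_exponent x
        have hdvd : addOrderOf x ∣ n / p := by
          rw [← Nat.factorization_le_iff_dvd hd0 hnp0, Nat.factorization_div hpn,
            hp'.factorization]
          intro r
          rcases eq_or_ne r p with rfl | hr
          · have hlt : (addOrderOf x).factorization r < n.factorization r := by
              have hle := (Nat.factorization_le_iff_dvd hd0 hn).mpr hdn r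
              rcases lt_or_eq_of_le hle with h' | h'
              · exact h'
              · exact absurd (h' ▸ Nat.ordProj_dvd _ r) (h x hx)
            simpa using Nat.le_sub_one_of_lt hlt
          · simpa [Finsupp.single_apply, hr.symm] using
              (Nat.factorization_le_iff_dvd hd0 hn).mpr hdn r
        exact addOrderOf_dvd_iff_nsmul_eq_zero.mp hdvd
      -- hence the whole group is killed by n / p
      have hall : ∀ a : A, (n / p) • a = 0 := by
        intro a
        have ha : a ∈ AddSubgroup.closure {x : A | q x = 1} := hgen ▸ AddSubgroup.mem_top a
        refine AddSubgroup.closure_induction (fun x hx => hsub hx) (smul_zero _) ?_ ?_ ha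
        · intro x y _ _ hx hy; rw [smul_add, hx, hy, add_zero]
        · intro x _ hx; rw [smul_neg, hx, neg_zero]
      have : n ∣ n / p := AddMonoid.exponent_dvd_of_forall_nsmul_eq_zero hall
      exact absurd (Nat.le_of_dvd (Nat.pos_of_ne_zero hnp0) this)
        (not_le.mpr (Nat.div_lt_self (Nat.pos_of_ne_zero hn) hp'.one_lt))
    obtain ⟨x, hx1, hx2⟩ := hex
    set d := addOrderOf x with hd_def
    have hd0 : d ≠ 0 := (addOrderOf_pos x).ne'
    refine ⟨(d / p ^ n.factorization p) • x, q_nsmul_isotropic hq hx1 _, ?_⟩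
    have hcd : d / (d / p ^ n.factorization p) = p ^ n.factorization p :=
      Nat.div_div_self hx2 hd0
    rw [addOrderOf_nsmul x, Nat.gcd_eq_right (Nat.div_dvd_of_dvd hx2), hcd]
  -- combine the prime-power pieces
  have main : ∀ s : Finset ℕ, s ⊆ n.primeFactors →
      ∃ a : A, q a = 1 ∧ addOrderOf a = ∏ p ∈ s, p ^ n.factorization p := by
    intro s
    induction s using Finset.induction with
    | empty => exact fun _ => ⟨0, q_zero hq, by simp⟩
    | @insert p s hps ih =>
      intro hsub
      obtain ⟨a, ha1, ha2⟩ := ih (fun r hr => hsub (Finset.mem_insert_of_mem hr))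
      obtain ⟨y, hy1, hy2⟩ := key p (hsub (Finset.mem_insert_self p s))
      have hpprime : p.Prime := Nat.prime_of_mem_primeFactors (hsub (Finset.mem_insert_self p s))
      have hco : Nat.Coprime (addOrderOf y) (addOrderOf a) := by
        rw [hy2, ha2]
        refine Nat.Coprime.prod_right fun r hr => ?_
        have hrprime : r.Prime :=
          Nat.prime_of_mem_primeFactors (hsub (Finset.mem_insert_of_mem hr))
        exact Nat.Coprime.pow _ _ ((Nat.coprime_primes hpprime hrprime).mpr
          (fun h => hps (h ▸ hr)))
      refine ⟨y + a, ?_, ?_⟩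
      · rw [q_add hq, Bform_eq_one_of_coprime hq _ _ hco, hy1, ha1, one_mul, one_mul]
      · rw [AddCommute.addOrderOf_add_eq_mul_addOrderOf_of_coprime (AddCommute.all y a) hco,
          hy2, ha2, Finset.prod_insert hps]
  obtain ⟨a, ha1, ha2⟩ := main n.primeFactors le_rfl
  refine ⟨a, ha1, ?_⟩
  rw [ha2]
  conv_rhs => rw [← Nat.factorization_prod_pow_eq_self hn]
  rfl
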